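/- For every (R,ψ) ∈ ℝ², S is differentiable at (R,ψ) with ∂S/∂R(R,ψ) = sin(ψ − ψ₀) and ∂S/∂ψ(R,ψ) = (R − l(ψ))·cos(ψ − ψ₀); that is, the norm-one 1-form π = sin(ψ − ψ₀) dR + (R − l(ψ)) cos(ψ − ψ₀) dψ constructed in the paper is exact, with π = dS. -/

import Mathlib

open Real

/-- The separated solution of the Hamilton–Jacobi equation for straight lines,
in the coordinates `(R,ψ)` with metric `dR² + (R − l(ψ))² dψ²`. -/
noncomputable def S (l : ℝ → ℝ) (ψ₀ : ℝ) (R ψ : ℝ) : ℝ :=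
  R * Real.sin (ψ - ψ₀) - ∫ t in (0:ℝ)..ψ, l t * Real.cos (t - ψ₀)

theorem stmt_8 (l : ℝ → ℝ) (hl : Continuous l) (ψ₀ R ψ : ℝ) :
    DifferentiableAt ℝ (fun p : ℝ × ℝ => S l ψ₀ p.1 p.2) (R, ψ) ∧
    HasDerivAt (fun r => S l ψ₀ r ψ) (Real.sin (ψ - ψ₀)) R ∧
    HasDerivAt (fun p => S l ψ₀ R p) ((R - l ψ) * Real.cos (ψ - ψ₀)) ψ := by
  have hcont : Continuous (fun t => l t * Real.cos (t - ψ₀)) :=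
    hl.mul (Real.continuous_cos.comp (continuous_id.sub continuous_const))
  have hF : ∀ x : ℝ, HasDerivAt (fun y => ∫ t in (0:ℝ)..y, l t * Real.cos (t - ψ₀))
      (l x * Real.cos (x - ψ₀)) x := fun x =>
    intervalIntegral.integral_hasDerivAt_right (hcont.intervalIntegrable 0 x)
      hcont.aestronglyMeasurable.stronglyMeasurableAtFilter hcont.continuousAt
  refine ⟨?_, ?_, ?_⟩
  · unfold S
    apply DifferentiableAt.sub
    · exact differentiableAt_fst.mul
        ((Real.differentiable_sin.differentiableAt).comp _
          (differentiableAt_snd.sub (differentiableAt_const _)))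
    · exact ((hF ψ).differentiableAt).comp (R, ψ)
        (differentiableAt_snd : DifferentiableAt ℝ (Prod.snd : ℝ × ℝ → ℝ) (R, ψ))
  · unfold S
    have : HasDerivAt (fun r : ℝ => r * Real.sin (ψ - ψ₀)) (Real.sin (ψ - ψ₀)) R := by
      simpa using (hasDerivAt_id R).mul_const (Real.sin (ψ - ψ₀))
    simpa using this.sub_const (∫ t in (0:ℝ)..ψ, l t * Real.cos (t - ψ₀))
  · unfold S
    have h1 : HasDerivAt (fun p : ℝ => R * Real.sin (p - ψ₀)) (R * Real.cos (ψ - ψ₀)) ψ := by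
      have := ((Real.hasDerivAt_sin (ψ - ψ₀)).comp ψ
        ((hasDerivAt_id ψ).sub_const ψ₀)).const_mul R
      simpa using this
    have := h1.sub (hF ψ)
    rw [show (R - l ψ) * Real.cos (ψ - ψ₀) = R * Real.cos (ψ - ψ₀) - l ψ * Real.cos (ψ - ψ₀) by ring]
    exact this
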